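/- Let f : X → ℝ be convex and differentiable and let X_t be a curve satisfying (d/dt) f(X_t) ≤ -‖∇f(X_t)‖^{p/(p-1)} with ‖X_t - x*‖ ≤ R for all t ≥ 0, where 1 < p < ∞. Then f(X_t) - f(x*) ≤ p^{p-1} R^p / t^{p-1} for all t > 0. -/

import Mathlib

open Real RealInnerProductSpace

lemma grad_ineq {E : Type*} [NormedAddCommGroup E] [InnerProductSpace ℝ E]
    [FiniteDimensional ℝ E]
    (f : E → ℝ) (hf : Differentiable ℝ f) (hconv : ConvexOn ℝ Set.univ f) (x y : E) :
    f x - f y ≤ ⟪gradient f x, x - y⟫ := by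
  set φ : ℝ → ℝ := fun h => f (h • (y - x) + x) with hφ
  have hφconv : ConvexOn ℝ Set.univ φ := by
    have := hconv.comp_affineMap (AffineMap.lineMap x y)
    simpa [φ, Function.comp_def, AffineMap.lineMap_apply, Set.preimage_univ] using this
  have hd : ∀ h : ℝ, HasDerivAt φ (fderiv ℝ f (h • (y - x) + x) (y - x)) h := by
    intro h
    have h1 : HasDerivAt (fun h : ℝ => h • (y - x) + x) (y - x) h := by
      simpa using ((hasDerivAt_id h).smul_const (y - x)).add_const x
    exact (hf _).hasFDerivAt.comp_hasDerivAt h h1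
  have hslope : deriv φ 0 ≤ slope φ 0 1 :=
    hφconv.deriv_le_slope (Set.mem_univ 0) (Set.mem_univ 1) zero_lt_one
      (hd 0).differentiableAt
  have h0 : deriv φ 0 = fderiv ℝ f x (y - x) := by
    have := (hd 0).deriv
    simpa using this
  have hslope1 : slope φ 0 1 = f y - f x := by
    simp [slope_def_field, φ]
  have hgrad : fderiv ℝ f x (y - x) = ⟪gradient f x, y - x⟫ := by
    have hg : HasFDerivAt f ((InnerProductSpace.toDual ℝ E) (gradient f x)) x :=
      hasGradientAt_iff_hasFDerivAt.mp (hf x).hasGradientAt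
    rw [hg.fderiv]
    simp [InnerProductSpace.toDual_apply_apply]
  have : ⟪gradient f x, y - x⟫ ≤ f y - f x := by
    rw [← hgrad, ← h0, ← hslope1]; exact hslope
  have h2 : ⟪gradient f x, x - y⟫ = -⟪gradient f x, y - x⟫ := by
    rw [← inner_neg_right]; rw [neg_sub]
  linarith

theorem descent_flow_convex_rate
    {E : Type*} [NormedAddCommGroup E] [InnerProductSpace ℝ E] [FiniteDimensional ℝ E]
    (f : E → ℝ) (hf : Differentiable ℝ f) (hconv : ConvexOn ℝ Set.univ f)
    (xstar : E) (hmin : ∀ y, f xstar ≤ f y)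
    (p R : ℝ) (hp : 1 < p)
    (C : ℝ → E) (d : ℝ → ℝ)
    (hderiv : ∀ t ≥ (0 : ℝ), HasDerivAt (fun s => f (C s)) (d t) t)
    (hdecay : ∀ t ≥ (0 : ℝ), d t ≤ -‖gradient f (C t)‖ ^ (p / (p - 1)))
    (hR : ∀ t ≥ (0 : ℝ), ‖C t - xstar‖ ≤ R) :
    ∀ t > (0 : ℝ), f (C t) - f xstar ≤ p ^ (p - 1) * R ^ p / t ^ (p - 1) := by
  intro T hT
  set q : ℝ := p / (p - 1) with hq
  have hpq : p.HolderConjugate q := Real.HolderConjugate.conjExponent hp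
  have hp0 : (0 : ℝ) < p := hpq.pos
  have hq1 : 1 < q := hpq.symm.lt
  have hR0 : 0 ≤ R := (norm_nonneg _).trans (hR 0 le_rfl)
  set M : ℝ := p ^ (p - 1) * R ^ p with hM
  set g : ℝ → ℝ := fun t => f (C t) - f xstar with hg
  have hE : ∀ t ∈ Set.Ioo (0:ℝ) T,
      HasDerivAt (fun s => M * s - s ^ p * g s)
        (M - (p * t ^ (p - 1) * g t + t ^ p * d t)) t := by
    intro t ht
    have h1 : HasDerivAt (fun s : ℝ => s ^ p) (p * t ^ (p - 1)) t :=
      Real.hasDerivAt_rpow_const (Or.inl ht.1.ne')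
    have h2 : HasDerivAt g (d t) t := (hderiv t ht.1.le).sub_const _
    have h4 := ((hasDerivAt_id t).const_mul M).sub (h1.mul h2)
    exact h4.congr_deriv (by ring)
  have hkey : ∀ t ∈ Set.Ioo (0:ℝ) T,
      p * t ^ (p - 1) * g t + t ^ p * d t ≤ M := by
    intro t ht
    set s : ℝ := ‖gradient f (C t)‖ with hs
    have hs0 : 0 ≤ s := norm_nonneg _
    have ht0 : 0 < t := ht.1
    have htp1 : 0 ≤ t ^ (p - 1) := rpow_nonneg ht0.le _
    have htp : 0 ≤ t ^ p := rpow_nonneg ht0.le _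
    have hd1 : d t ≤ -s ^ q := hdecay t ht0.le
    have hg1 : g t ≤ s * R := by
      have h1 : g t ≤ ⟪gradient f (C t), C t - xstar⟫ :=
        grad_ineq f hf hconv (C t) xstar
      have h2 : ⟪gradient f (C t), C t - xstar⟫ ≤ s * ‖C t - xstar‖ :=
        real_inner_le_norm _ _
      have h3 : s * ‖C t - xstar‖ ≤ s * R :=
        mul_le_mul_of_nonneg_left (hR t ht0.le) hs0
      linarith
    have hyoung : (p * R) * (t ^ (p - 1) * s) ≤
        (p * R) ^ p / p + (t ^ (p - 1) * s) ^ q / q :=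
      Real.young_inequality_of_nonneg (by positivity) (by positivity) hpq
    have he1 : (p * R) ^ p / p = M := by
      rw [Real.mul_rpow hp0.le hR0, hM, Real.rpow_sub hp0, Real.rpow_one]; ring
    have he2 : (t ^ (p - 1) * s) ^ q = t ^ p * s ^ q := by
      rw [Real.mul_rpow htp1 hs0, ← Real.rpow_mul ht0.le, hpq.sub_one_mul_conj]
    have he3 : t ^ p * s ^ q / q ≤ t ^ p * s ^ q :=
      div_le_self (by positivity) hq1.le
    have a1 : p * t ^ (p - 1) * g t ≤ p * t ^ (p - 1) * (s * R) :=
      mul_le_mul_of_nonneg_left hg1 (by positivity)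
    have a2 : t ^ p * d t ≤ t ^ p * (-s ^ q) :=
      mul_le_mul_of_nonneg_left hd1 htp
    rw [he1, he2] at hyoung
    nlinarith [hyoung, he3, a1, a2]
  have hmono : MonotoneOn (fun s => M * s - s ^ p * g s) (Set.Icc 0 T) := by
    apply monotoneOn_of_deriv_nonneg (convex_Icc 0 T)
    · apply ContinuousOn.sub
      · exact (continuous_const.mul continuous_id).continuousOn
      · apply ContinuousOn.mul
        · exact (Real.continuous_rpow_const hp0.le).continuousOn
        · intro x hx
          exact ((hderiv x hx.1).continuousAt.sub continuousAt_const).continuousWithinAt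
    · rw [interior_Icc]
      intro t ht
      exact ((hE t ht).differentiableAt).differentiableWithinAt
    · rw [interior_Icc]
      intro t ht
      rw [(hE t ht).deriv]
      have := hkey t ht
      linarith
  have hF0 : M * 0 - (0:ℝ) ^ p * g 0 = 0 := by
    simp [Real.zero_rpow hp0.ne']
  have hFT : M * 0 - (0:ℝ) ^ p * g 0 ≤ M * T - T ^ p * g T :=
    hmono ⟨le_rfl, hT.le⟩ ⟨hT.le, le_rfl⟩ hT.le
  have hineq : T ^ p * g T ≤ M * T := by
    rw [hF0] at hFT; linarith
  have hTp1 : 0 < T ^ (p - 1) := rpow_pos_of_pos hT _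
  have hTsplit : T ^ p = T ^ (p - 1) * T := by
    rw [← Real.rpow_add_one hT.ne' (p - 1)]; norm_num
  have hgoal : g T ≤ M / T ^ (p - 1) := by
    rw [le_div_iff₀ hTp1]
    have : g T * T ^ (p - 1) * T ≤ M * T := by
      calc g T * T ^ (p - 1) * T = T ^ p * g T := by rw [hTsplit]; ring
        _ ≤ M * T := hineq
    exact le_of_mul_le_mul_right this hT
  exact hgoal
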